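/- If w ∈ Sₙ corresponds to the pair of standard Young tableaux (P, Q) under the Robinson–Schensted correspondence, then w⁻¹ corresponds to (Q, P). -/

import Mathlib

/-- Schensted row insertion of `x` into a tableau given as a list of rows. -/
def rowInsert : List (List ℕ) → ℕ → List (List ℕ)
  | [], x => [[x]]
  | r :: rs, x =>
    match r.findIdx? (fun y => x < y) with
    | none => (r ++ [x]) :: rs
    | some i => r.set i x :: rowInsert rs (r.getD i 0)

/-- The shape of a tableau: the list of row lengths. -/
def shapeOf (T : List (List ℕ)) : List ℕ := T.map List.length

/-- Add a box labelled `k` at the end of row `row` (creating the row if needed). -/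
def addBox (Q : List (List ℕ)) (row k : ℕ) : List (List ℕ) :=
  if row < Q.length then Q.set row (Q.getD row [] ++ [k]) else Q ++ [[k]]

/-- The Robinson–Schensted correspondence on words: the pair `(P, Q)` of the
insertion tableau and the recording tableau. -/
def RSpair (w : List ℕ) : List (List ℕ) × List (List ℕ) :=
  (w.zipIdx.map Prod.swap).foldl
    (fun PQ ix =>
      let P' := rowInsert PQ.1 ix.2
      let row := (List.range P'.length).findIdx
        (fun j => (shapeOf PQ.1).getD j 0 ≠ (shapeOf P').getD j 0)
      (P', addBox PQ.2 row (ix.1 + 1)))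
    ([], [])

/-- The one-line word (with values in `{1, …, n}`) of a permutation of `Fin n`. -/
def permWord {n : ℕ} (w : Equiv.Perm (Fin n)) : List ℕ :=
  List.ofFn fun i => (w i : ℕ) + 1

/-- The insertion tableau `P(w)` of a permutation. -/
def RSP {n : ℕ} (w : Equiv.Perm (Fin n)) : List (List ℕ) := (RSpair (permWord w)).1

/-- The recording tableau `Q(w)` of a permutation. -/
def RSQ {n : ℕ} (w : Equiv.Perm (Fin n)) : List (List ℕ) := (RSpair (permWord w)).2



/-! ### Part A : landing row -/

def landing : List (List ℕ) → ℕ → ℕ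
  | [], _ => 0
  | r :: rs, x =>
    match r.findIdx? (fun y => x < y) with
    | none => 0
    | some i => landing rs (r.getD i 0) + 1

def rowOf (T : List (List ℕ)) (x : ℕ) : ℕ :=
  (List.range (rowInsert T x).length).findIdx
    (fun j => (shapeOf T).getD j 0 ≠ (shapeOf (rowInsert T x)).getD j 0)

lemma rowInsert_length (T : List (List ℕ)) (x : ℕ) :
    (rowInsert T x).length = max T.length (landing T x + 1) := by
  induction T generalizing x with
  | nil => simp [rowInsert, landing]
  | cons r rs ih =>
    rw [rowInsert, landing]
    rcases h : r.findIdx? (fun y => x < y) with _ | i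
    · simp
    · simp only [List.length_cons, ih]
      omega

lemma shape_getD (T : List (List ℕ)) (x : ℕ) (j : ℕ) :
    (shapeOf (rowInsert T x)).getD j 0
      = (shapeOf T).getD j 0 + if j = landing T x then 1 else 0 := by
  induction T generalizing x j with
  | nil =>
    rcases j with _ | k <;> simp [rowInsert, landing, shapeOf]
  | cons r rs ih =>
    rw [rowInsert, landing]
    rcases h : r.findIdx? (fun y => x < y) with _ | i
    · rcases j with _ | k <;> simp [shapeOf]
    · rcases j with _ | k
      · simp [shapeOf]
      · simpa [shapeOf] using ih (r.getD i 0) k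

lemma landing_lt (T : List (List ℕ)) (x : ℕ) :
    landing T x < (rowInsert T x).length := by
  rw [rowInsert_length]; omega

lemma rowOf_eq (T : List (List ℕ)) (x : ℕ) : rowOf T x = landing T x := by
  unfold rowOf
  rw [List.findIdx_eq (by simpa using landing_lt T x)]
  constructor
  · simp only [List.getElem_range, shape_getD, if_pos rfl]
    simp
  · intro j hj
    simp only [List.getElem_range, shape_getD]
    simp [Nat.ne_of_lt hj]

/-! ### Part B : row-by-row computation -/

def rstep (σ : List ℕ × List ℕ × List (ℕ × ℕ)) (e : ℕ × ℕ) :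
    List ℕ × List ℕ × List (ℕ × ℕ) :=
  match σ.1.findIdx? (fun y => e.2 < y) with
  | none => (σ.1 ++ [e.2], σ.2.1 ++ [e.1], σ.2.2)
  | some i => (σ.1.set i e.2, σ.2.1, σ.2.2 ++ [(e.1, σ.1.getD i 0)])

def rowD (l : List (ℕ × ℕ)) : List ℕ × List ℕ × List (ℕ × ℕ) :=
  l.foldl rstep ([], [], [])

lemma rstep_len (σ : List ℕ × List ℕ × List (ℕ × ℕ)) (e : ℕ × ℕ) :
    (rstep σ e).1.length + (rstep σ e).2.2.length = σ.1.length + σ.2.2.length + 1 := by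
  unfold rstep
  rcases h : σ.1.findIdx? (fun y => e.2 < y) with _ | i <;> simp <;> omega

lemma rstep_r_pos (σ : List ℕ × List ℕ × List (ℕ × ℕ)) (e : ℕ × ℕ) :
    1 ≤ (rstep σ e).1.length := by
  unfold rstep
  rcases h : σ.1.findIdx? (fun y => e.2 < y) with _ | i
  · simp
  · have : i < σ.1.length := (List.findIdx?_eq_some_iff_findIdx_eq.1 h).1
    simp; omega

lemma foldl_rstep_len (l : List (ℕ × ℕ)) : ∀ σ,
    (l.foldl rstep σ).1.length + (l.foldl rstep σ).2.2.length
      = σ.1.length + σ.2.2.length + l.length := by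
  induction l with
  | nil => simp
  | cons e l ih =>
    intro σ
    simp only [List.foldl_cons, ih, rstep_len]
    simp; omega

lemma foldl_rstep_r_pos (l : List (ℕ × ℕ)) : ∀ σ, 1 ≤ σ.1.length →
    1 ≤ (l.foldl rstep σ).1.length := by
  induction l with
  | nil => intro σ h; simpa using h
  | cons e l ih => intro σ h; exact ih _ (rstep_r_pos σ e)

lemma rowD_d_lt (l : List (ℕ × ℕ)) (h : l ≠ []) :
    (rowD l).2.2.length < l.length := by
  rcases l with _ | ⟨e, l⟩
  · exact absurd rfl h
  · have h1 := foldl_rstep_len (e :: l) (([], [], []) : List ℕ × List ℕ × List (ℕ × ℕ))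
    have h2 : 1 ≤ ((e :: l).foldl rstep (([], [], []) : List ℕ × List ℕ × List (ℕ × ℕ))).1.length := by
      rw [List.foldl_cons]
      exact foldl_rstep_r_pos l _ (rstep_r_pos _ _)
    unfold rowD
    simp only [List.length_nil] at h1
    omega

def RS2 : List (ℕ × ℕ) → List (List ℕ) × List (List ℕ)
  | [] => ([], [])
  | e :: l =>
    ((rowD (e :: l)).1 :: (RS2 (rowD (e :: l)).2.2).1,
     (rowD (e :: l)).2.1 :: (RS2 (rowD (e :: l)).2.2).2)
  termination_by l => l.length
  decreasing_by exact rowD_d_lt _ (List.cons_ne_nil _ _)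

def Ffold (l : List (ℕ × ℕ)) (PQ : List (List ℕ) × List (List ℕ)) :
    List (List ℕ) × List (List ℕ) :=
  l.foldl (fun PQ e => (rowInsert PQ.1 e.2, addBox PQ.2 (rowOf PQ.1 e.2) e.1)) PQ

lemma RSpair_eq_Ffold (w : List ℕ) :
    RSpair w = Ffold ((w.zipIdx.map Prod.swap).map (fun ix => (ix.1 + 1, ix.2))) ([], []) := by
  unfold RSpair Ffold rowOf
  rw [List.foldl_map, List.foldl_map, List.foldl_map]

lemma addBox_cons_succ (a : List ℕ) (Q : List (List ℕ)) (j k : ℕ) :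
    addBox (a :: Q) (j+1) k = a :: addBox Q j k := by
  unfold addBox
  rcases Nat.lt_or_ge j Q.length with h | h
  · rw [if_pos (by simpa using Nat.succ_lt_succ h), if_pos h]
    simp [List.set_cons_succ]
  · rw [if_neg (by simp; omega), if_neg (by omega)]
    simp

lemma addBox_cons_zero (a : List ℕ) (Q : List (List ℕ)) (k : ℕ) :
    addBox (a :: Q) 0 k = (a ++ [k]) :: Q := by
  simp [addBox]

lemma Ffold_append_single (l : List (ℕ × ℕ)) (PQ) (e : ℕ × ℕ) :
    Ffold (l ++ [e]) PQ
      = ((rowInsert (Ffold l PQ).1 e.2),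
         addBox (Ffold l PQ).2 (rowOf (Ffold l PQ).1 e.2) e.1) := by
  unfold Ffold
  rw [List.foldl_append]
  simp

lemma Ffold_decomp (l : List (ℕ × ℕ)) (h : l ≠ []) :
    Ffold l ([], []) = ((rowD l).1 :: (Ffold (rowD l).2.2 ([], [])).1,
                        (rowD l).2.1 :: (Ffold (rowD l).2.2 ([], [])).2) := by
  induction l using List.reverseRecOn with
  | nil => exact absurd rfl h
  | append_singleton l e ih =>
    have hrow : rowD (l ++ [e]) = rstep (rowD l) e := by
      unfold rowD; rw [List.foldl_append]; simp
    rcases eq_or_ne l [] with rfl | hl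
    · simp only [List.nil_append]
      show Ffold [e] ([], []) = _
      have : Ffold [e] ([], []) = ([[e.2]], [[e.1]]) := by
        simp [Ffold, rowInsert, rowOf_eq, landing, addBox]
      rw [this]
      rw [show rowD [e] = ([e.2], [e.1], []) from by
        simp [rowD, rstep, List.findIdx?_nil]]
      simp [Ffold]
    · rw [Ffold_append_single, ih hl, hrow]
      rcases hfd : (rowD l).1.findIdx? (fun y => e.2 < y) with _ | i
      · -- append case
        have h1 : rowInsert ((rowD l).1 :: (Ffold (rowD l).2.2 ([], [])).1) e.2
            = ((rowD l).1 ++ [e.2]) :: (Ffold (rowD l).2.2 ([], [])).1 := by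
          rw [rowInsert, hfd]
        have h2 : landing ((rowD l).1 :: (Ffold (rowD l).2.2 ([], [])).1) e.2 = 0 := by
          rw [landing, hfd]
        rw [h1]
        simp only [rowOf_eq] at *
        rw [h2, addBox_cons_zero]
        rw [rstep, hfd]
      · -- bump case
        set y := (rowD l).1.getD i 0 with hy
        have h1 : rowInsert ((rowD l).1 :: (Ffold (rowD l).2.2 ([], [])).1) e.2
            = (rowD l).1.set i e.2 :: rowInsert (Ffold (rowD l).2.2 ([], [])).1 y := by
          rw [rowInsert, hfd]
        have h2 : landing ((rowD l).1 :: (Ffold (rowD l).2.2 ([], [])).1) e.2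
            = landing (Ffold (rowD l).2.2 ([], [])).1 y + 1 := by
          rw [landing, hfd]
        rw [h1]
        simp only [rowOf_eq] at *
        rw [h2, addBox_cons_succ]
        rw [rstep, hfd]
        simp only
        rw [Ffold_append_single]
        simp only [rowOf_eq]
        rfl

lemma RS2_eq_Ffold_aux : ∀ (n : ℕ) (l : List (ℕ × ℕ)), l.length ≤ n →
    RS2 l = Ffold l ([], []) := by
  intro n
  induction n with
  | zero =>
    intro l hl
    have : l = [] := List.length_eq_zero_iff.1 (Nat.le_zero.1 hl)
    subst this
    simp [RS2, Ffold]
  | succ n ih =>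
    intro l hl
    rcases l with _ | ⟨e, l⟩
    · simp [RS2, Ffold]
    · rw [RS2, Ffold_decomp _ (List.cons_ne_nil _ _)]
      have hlt := rowD_d_lt (e :: l) (List.cons_ne_nil _ _)
      rw [ih _ (by simp at hl hlt ⊢; omega)]

lemma RS2_eq_Ffold (l : List (ℕ × ℕ)) : RS2 l = Ffold l ([], []) :=
  RS2_eq_Ffold_aux l.length l le_rfl


open Classical in
/-- Length of the longest chain (increasing in both coordinates) ending at `e`. -/
noncomputable def cVal (s : Finset (ℕ × ℕ)) (e : ℕ × ℕ) : ℕ :=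
  ((s.filter (fun f => f.1 < e.1 ∧ f.2 < e.2)).attach.sup
    (fun f => cVal s f.1)) + 1
  termination_by e.1
  decreasing_by
    have := f.2
    simp only [Finset.mem_filter] at this
    exact this.2.1

open Classical

lemma cVal_def' (s : Finset (ℕ × ℕ)) (e : ℕ × ℕ) :
    cVal s e = (s.filter (fun f => f.1 < e.1 ∧ f.2 < e.2)).sup (cVal s) + 1 := by
  rw [cVal, Finset.sup_attach]

lemma cVal_pos (s : Finset (ℕ × ℕ)) (e : ℕ × ℕ) : 1 ≤ cVal s e := by
  rw [cVal_def']; omega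

lemma cVal_lt {s : Finset (ℕ × ℕ)} {e f : ℕ × ℕ} (hf : f ∈ s)
    (h1 : f.1 < e.1) (h2 : f.2 < e.2) : cVal s f < cVal s e := by
  rw [cVal_def' s e]
  have : cVal s f ≤ (s.filter (fun f => f.1 < e.1 ∧ f.2 < e.2)).sup (cVal s) :=
    Finset.le_sup (by simp [Finset.mem_filter, hf, h1, h2])
  omega

lemma cVal_exists {s : Finset (ℕ × ℕ)} {e : ℕ × ℕ} (h : 2 ≤ cVal s e) :
    ∃ f ∈ s, f.1 < e.1 ∧ f.2 < e.2 ∧ cVal s f + 1 = cVal s e := by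
  rw [cVal_def'] at h ⊢
  set X := s.filter (fun f => f.1 < e.1 ∧ f.2 < e.2) with hX
  have hne : X.Nonempty := by
    by_contra hcon
    rw [Finset.not_nonempty_iff_eq_empty] at hcon
    rw [hcon] at h; simp at h
  obtain ⟨f, hfX, hfsup⟩ := Finset.exists_mem_eq_sup X hne (cVal s)
  simp only [hX, Finset.mem_filter] at hfX
  exact ⟨f, hfX.1, hfX.2.1, hfX.2.2, by omega⟩

lemma cVal_chain {s : Finset (ℕ × ℕ)} {e : ℕ × ℕ} {m : ℕ} (h1 : 1 ≤ m)
    (h2 : m < cVal s e) : ∃ f ∈ s, f.1 < e.1 ∧ f.2 < e.2 ∧ cVal s f = m := by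
  suffices H : ∀ c e, cVal s e = c → ∀ m, 1 ≤ m → m < c →
      ∃ f ∈ s, f.1 < e.1 ∧ f.2 < e.2 ∧ cVal s f = m by
    exact H _ e rfl m h1 h2
  clear h1 h2
  intro c
  induction c using Nat.strong_induction_on with
  | _ c ih =>
  intro e hc m h1 h2
  obtain ⟨f, hfs, hf1, hf2, hfc⟩ := cVal_exists (s := s) (e := e) (by omega)
  rcases eq_or_lt_of_le (Nat.succ_le_of_lt h2) with heq | hlt
  · exact ⟨f, hfs, hf1, hf2, by omega⟩
  · obtain ⟨g, hgs, hg1, hg2, hgc⟩ := ih (cVal s f) (by omega) f rfl m h1 (by omega)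
    exact ⟨g, hgs, hg1.trans hf1, hg2.trans hf2, hgc⟩

lemma cVal_swap (s : Finset (ℕ × ℕ)) (e : ℕ × ℕ) :
    cVal (s.image Prod.swap) e.swap = cVal s e := by
  suffices H : ∀ n e, (e : ℕ × ℕ).1 ≤ n → cVal (s.image Prod.swap) e.swap = cVal s e by
    exact H e.1 e le_rfl
  clear e
  intro n
  induction n using Nat.strong_induction_on with
  | _ n ih =>
  intro e hn
  rw [cVal_def', cVal_def']
  congr 1
  have himg : (s.image Prod.swap).filter
      (fun f => f.1 < e.swap.1 ∧ f.2 < e.swap.2)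
      = (s.filter (fun f => f.1 < e.1 ∧ f.2 < e.2)).image Prod.swap := by
    ext x
    simp only [Finset.mem_filter, Finset.mem_image]
    constructor
    · rintro ⟨⟨g, hg, rfl⟩, h1, h2⟩
      exact ⟨g, ⟨hg, h2, h1⟩, rfl⟩
    · rintro ⟨g, ⟨hg, h1, h2⟩, rfl⟩
      exact ⟨⟨g, hg, rfl⟩, h2, h1⟩
  rw [himg, Finset.sup_image]
  apply Finset.sup_congr rfl
  intro f hf
  simp only [Finset.mem_filter] at hf
  have := ih f.1 (by omega) f le_rfl
  simpa using this

/-! ### Grids, classes, consecutive pairs -/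

def Grid (s : Finset (ℕ × ℕ)) : Prop :=
  ∀ e ∈ s, ∀ f ∈ s, e ≠ f → e.1 ≠ f.1 ∧ e.2 ≠ f.2

lemma Grid.antichain {s : Finset (ℕ × ℕ)} (hs : Grid s) {e f : ℕ × ℕ}
    (he : e ∈ s) (hf : f ∈ s) (hc : cVal s e = cVal s f) (h1 : e.1 < f.1) :
    f.2 < e.2 := by
  rcases lt_trichotomy e.2 f.2 with h | h | h
  · have := cVal_lt (e := f) (f := e) he h1 h
    omega
  · have hne : e ≠ f := fun hef => by simp [hef] at h1
    exact absurd h (hs e he f hf hne).2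
  · exact h

lemma Grid.swap {s : Finset (ℕ × ℕ)} (hs : Grid s) : Grid (s.image Prod.swap) := by
  rintro _ he _ hf hne
  simp only [Finset.mem_image] at he hf
  obtain ⟨a, ha, rfl⟩ := he
  obtain ⟨b, hb, rfl⟩ := hf
  have hab : a ≠ b := fun h => hne (by rw [h])
  have := hs a ha b hb hab
  simp [Prod.swap]
  omega

lemma image_swap_swap (s : Finset (ℕ × ℕ)) :
    (s.image Prod.swap).image Prod.swap = s := by
  rw [Finset.image_image]
  simp [Function.comp_def]

noncomputable def clsS (s u : Finset (ℕ × ℕ)) (c : ℕ) : Finset ℕ :=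
  (u.filter (fun e => cVal s e = c)).image Prod.snd

noncomputable def clsF (s u : Finset (ℕ × ℕ)) (c : ℕ) : Finset ℕ :=
  (u.filter (fun e => cVal s e = c)).image Prod.fst

def Consec (s : Finset (ℕ × ℕ)) (e f : ℕ × ℕ) : Prop :=
  e ∈ s ∧ f ∈ s ∧ cVal s e = cVal s f ∧ e.1 < f.1 ∧
    ∀ g ∈ s, cVal s g = cVal s e → ¬(e.1 < g.1 ∧ g.1 < f.1)

noncomputable def derSet (s u : Finset (ℕ × ℕ)) : Finset (ℕ × ℕ) :=
  ((u ×ˢ u).filter (fun p => Consec s p.1 p.2)).image (fun p => (p.2.1, p.1.2))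

lemma filter_image_swap (s : Finset (ℕ × ℕ)) (c : ℕ) :
    (s.image Prod.swap).filter (fun e => cVal (s.image Prod.swap) e = c)
      = (s.filter (fun e => cVal s e = c)).image Prod.swap := by
  ext x
  simp only [Finset.mem_filter, Finset.mem_image]
  constructor
  · rintro ⟨⟨g, hg, rfl⟩, h⟩
    rw [cVal_swap] at h
    exact ⟨g, ⟨hg, h⟩, rfl⟩
  · rintro ⟨g, ⟨hg, h⟩, rfl⟩
    exact ⟨⟨g, hg, rfl⟩, by rw [cVal_swap]; exact h⟩

lemma clsS_swap (s : Finset (ℕ × ℕ)) (c : ℕ) :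
    clsS (s.image Prod.swap) (s.image Prod.swap) c = clsF s s c := by
  unfold clsS clsF
  rw [filter_image_swap, Finset.image_image]
  rfl

lemma clsF_swap (s : Finset (ℕ × ℕ)) (c : ℕ) :
    clsF (s.image Prod.swap) (s.image Prod.swap) c = clsS s s c := by
  unfold clsS clsF
  rw [filter_image_swap, Finset.image_image]
  rfl

lemma Consec.swap_mp {s : Finset (ℕ × ℕ)} (hs : Grid s) {e f : ℕ × ℕ}
    (h : Consec s e f) : Consec (s.image Prod.swap) f.swap e.swap := by
  obtain ⟨he, hf, hc, h1, hbtw⟩ := h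
  have hsnd : f.2 < e.2 := hs.antichain he hf hc h1
  refine ⟨Finset.mem_image_of_mem _ hf, Finset.mem_image_of_mem _ he, ?_, ?_, ?_⟩
  · rw [cVal_swap, cVal_swap]; exact hc.symm
  · exact hsnd
  · rintro g' hg' hgc' ⟨hb1, hb2⟩
    simp only [Finset.mem_image] at hg'
    obtain ⟨g, hg, rfl⟩ := hg'
    rw [cVal_swap, cVal_swap] at hgc'
    have hgc : cVal s g = cVal s e := by omega
    simp only [Prod.swap] at hb1 hb2
    -- f.2 < g.2 < e.2
    have hgf : g ≠ f := fun hh => by subst hh; omega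
    have hge : g ≠ e := fun hh => by subst hh; omega
    -- g.1 < f.1 :
    have hgf1 : g.1 < f.1 := by
      rcases lt_trichotomy g.1 f.1 with h' | h' | h'
      · exact h'
      · exact absurd h' (hs g hg f hf hgf).1
      · have := hs.antichain hf hg (by omega) h'
        omega
    have hge1 : e.1 < g.1 := by
      rcases lt_trichotomy e.1 g.1 with h' | h' | h'
      · exact h'
      · exact absurd h'.symm (hs g hg e he hge).1
      · have := hs.antichain hg he (by omega) h'
        omega
    exact hbtw g hg hgc ⟨hge1, hgf1⟩

lemma Consec.swap_iff {s : Finset (ℕ × ℕ)} (hs : Grid s) {e f : ℕ × ℕ} :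
    Consec (s.image Prod.swap) f.swap e.swap ↔ Consec s e f := by
  constructor
  · intro h
    have := h.swap_mp (hs.swap)
    rwa [image_swap_swap, Prod.swap_swap, Prod.swap_swap] at this
  · exact fun h => h.swap_mp hs

lemma Consec.unique_right {s : Finset (ℕ × ℕ)} (hs : Grid s) {e f f' : ℕ × ℕ}
    (h : Consec s e f) (h' : Consec s e f') : f = f' := by
  by_contra hne
  obtain ⟨he, hf, hc, h1, hbtw⟩ := h
  obtain ⟨_, hf', hc', h1', hbtw'⟩ := h'
  have hff : f.1 ≠ f'.1 := (hs f hf f' hf' hne).1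
  rcases lt_or_gt_of_ne hff with hh | hh
  · exact hbtw' f hf (by omega) ⟨h1, hh⟩
  · exact hbtw f' hf' (by omega) ⟨h1', hh⟩

lemma Consec.unique_left {s : Finset (ℕ × ℕ)} (hs : Grid s) {e e' f : ℕ × ℕ}
    (h : Consec s e f) (h' : Consec s e' f) : e = e' := by
  by_contra hne
  obtain ⟨he, hf, hc, h1, hbtw⟩ := h
  obtain ⟨he', _, hc', h1', hbtw'⟩ := h'
  have hee : e.1 ≠ e'.1 := (hs e he e' he' hne).1
  rcases lt_or_gt_of_ne hee with hh | hh
  · exact hbtw e' he' (by omega) ⟨hh, h1'⟩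
  · exact hbtw' e he (by omega) ⟨hh, h1⟩

lemma derSet_swap {s : Finset (ℕ × ℕ)} (hs : Grid s) :
    derSet (s.image Prod.swap) (s.image Prod.swap)
      = (derSet s s).image Prod.swap := by
  unfold derSet
  ext x
  simp only [Finset.mem_image, Finset.mem_filter, Finset.mem_product]
  constructor
  · rintro ⟨⟨p1, p2⟩, ⟨⟨hp1, hp2⟩, hcon⟩, rfl⟩
    simp only [Finset.mem_image] at hp1 hp2
    obtain ⟨a, ha, rfl⟩ := hp1
    obtain ⟨b, hb, rfl⟩ := hp2
    have : Consec s b a := (Consec.swap_iff hs).1 hcon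
    exact ⟨(a.1, b.2), ⟨⟨(b, a), ⟨⟨hb, ha⟩, this⟩, rfl⟩, rfl⟩⟩
  · rintro ⟨y, ⟨⟨b, a⟩, ⟨⟨hb, ha⟩, hcon⟩, rfl⟩, rfl⟩
    refine ⟨(a.swap, b.swap), ⟨⟨⟨a, ha, rfl⟩, ⟨b, hb, rfl⟩⟩, ?_⟩, rfl⟩
    exact hcon.swap_mp hs

/-! ### The invariant of row processing -/

noncomputable def fmin (X : Finset ℕ) : ℕ := WithTop.untopD 0 X.min

lemma fmin_spec {X : Finset ℕ} (h : X.Nonempty) : fmin X = X.min' h := by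
  unfold fmin
  rw [← Finset.coe_min' h]
  rfl

lemma fmin_mem {X : Finset ℕ} (h : X.Nonempty) : fmin X ∈ X :=
  fmin_spec h ▸ X.min'_mem h

lemma fmin_le {X : Finset ℕ} {x : ℕ} (hx : x ∈ X) : fmin X ≤ x :=
  fmin_spec ⟨x, hx⟩ ▸ Finset.min'_le X x hx

lemma le_fmin {X : Finset ℕ} {a : ℕ} (h : X.Nonempty) (hb : ∀ b ∈ X, a ≤ b) :
    a ≤ fmin X := fmin_spec h ▸ Finset.le_min' X h a hb

lemma lt_fmin {X : Finset ℕ} {a : ℕ} (h : X.Nonempty) (hb : ∀ b ∈ X, a < b) :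
    a < fmin X := fmin_spec h ▸ (Finset.lt_min'_iff X h).2 hb

lemma fmin_eq {X : Finset ℕ} {a : ℕ} (ha : a ∈ X) (hb : ∀ b ∈ X, a ≤ b) :
    fmin X = a := le_antisymm (fmin_le ha) (le_fmin ⟨a, ha⟩ hb)

lemma fmin_singleton (a : ℕ) : fmin {a} = a :=
  fmin_eq (Finset.mem_singleton_self a) (by simp)

lemma clsS_nonempty_iff (s u : Finset (ℕ × ℕ)) (c : ℕ) :
    (clsS s u c).Nonempty ↔ (clsF s u c).Nonempty := by
  unfold clsS clsF
  simp [Finset.image_nonempty]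

structure RSInv (s u : Finset (ℕ × ℕ)) (σ : List ℕ × List ℕ × List (ℕ × ℕ)) : Prop where
  hlen : σ.2.1.length = σ.1.length
  hcls : ∀ c : ℕ, (clsS s u (c+1)).Nonempty ↔ c < σ.1.length
  hr : ∀ (j : ℕ) (h : j < σ.1.length), fmin (clsS s u (j+1)) = σ.1[j]
  hq : ∀ (j : ℕ) (h : j < σ.1.length),
    fmin (clsF s u (j+1)) = σ.2.1[j]'(lt_of_lt_of_le h (le_of_eq hlen.symm))
  hsort : List.Pairwise (· < ·) σ.1
  hdsort : List.Pairwise (fun a b => a.1 < b.1) σ.2.2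
  hd : σ.2.2.toFinset = derSet s u

lemma RSInv_init (s : Finset (ℕ × ℕ)) : RSInv s ∅ ([], [], []) := by
  refine ⟨rfl, ?_, ?_, ?_, List.Pairwise.nil, List.Pairwise.nil, ?_⟩
  · intro c
    simp [clsS]
  · intro j h; simp at h
  · intro j h; simp at h
  · simp [derSet]

theorem RSInv_step {s u : Finset (ℕ × ℕ)} {σ : List ℕ × List ℕ × List (ℕ × ℕ)}
    {e : ℕ × ℕ} (hs : Grid s) (hus : u ⊆ s) (he : e ∈ s) (heu : e ∉ u)
    (hlt : ∀ g ∈ u, g.1 < e.1) (hcov : ∀ g ∈ s, g.1 < e.1 → g ∈ u)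
    (hI : RSInv s u σ) : RSInv s (insert e u) (rstep σ e) := by
  obtain ⟨hlen, hcls, hr, hq, hsort, hdsort, hd⟩ := hI
  obtain ⟨r, qs, d⟩ := σ
  simp only at hlen hcls hr hq hsort hdsort hd
  set c := cVal s e with hc
  have hcpos : 1 ≤ c := cVal_pos s e
  have hclsSins : ∀ k, clsS s (insert e u) k
      = if c = k then insert e.2 (clsS s u k) else clsS s u k := by
    intro k
    unfold clsS
    rw [Finset.filter_insert, ← hc]
    split_ifs with h1
    · rw [Finset.image_insert]
    · rfl
  have hclsFins : ∀ k, clsF s (insert e u) k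
      = if c = k then insert e.1 (clsF s u k) else clsF s u k := by
    intro k
    unfold clsF
    rw [Finset.filter_insert, ← hc]
    split_ifs with h1
    · rw [Finset.image_insert]
    · rfl
  have memS : ∀ k (g : ℕ × ℕ), g ∈ u → cVal s g = k → g.2 ∈ clsS s u k := by
    intro k g hgu hgk
    exact Finset.mem_image_of_mem _ (Finset.mem_filter.2 ⟨hgu, hgk⟩)
  have memF : ∀ k (g : ℕ × ℕ), g ∈ u → cVal s g = k → g.1 ∈ clsF s u k := by
    intro k g hgu hgk
    exact Finset.mem_image_of_mem _ (Finset.mem_filter.2 ⟨hgu, hgk⟩)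
  have memS' : ∀ k b, b ∈ clsS s u k → ∃ g ∈ u, cVal s g = k ∧ g.2 = b := by
    intro k b hb
    simp only [clsS, Finset.mem_image, Finset.mem_filter] at hb
    obtain ⟨g, ⟨hgu, hgk⟩, hgb⟩ := hb
    exact ⟨g, hgu, hgk, hgb⟩
  -- (a) : rows below c - 1 have entry < e.2
  have ha : ∀ j, j + 2 ≤ c → ∃ (h : j < r.length), r[j] < e.2 := by
    intro j hj
    obtain ⟨f, hfs, hf1, hf2, hfc⟩ := cVal_chain (s := s) (e := e)
      (m := j + 1) (by omega) (by omega)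
    have hfu : f ∈ u := hcov f hfs hf1
    have hne : (clsS s u (j+1)).Nonempty := ⟨f.2, memS _ f hfu hfc⟩
    have hjlen : j < r.length := (hcls j).1 hne
    refine ⟨hjlen, ?_⟩
    rw [← hr j hjlen]
    exact lt_of_le_of_lt (fmin_le (memS _ f hfu hfc)) hf2
  -- (b) : e.2 is below the class-c row entry
  have hb : ∀ (h : c - 1 < r.length), e.2 < r[c-1] := by
    intro h
    have hc1 : c - 1 + 1 = c := by omega
    rw [← hr _ h, hc1]
    have hne : (clsS s u c).Nonempty := by
      have := (hcls (c-1)).2 h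
      rwa [hc1] at this
    apply lt_fmin hne
    intro b hbmem
    obtain ⟨g, hgu, hgk, hgb⟩ := memS' _ _ hbmem
    have hg1 : g.1 < e.1 := hlt g hgu
    rcases lt_trichotomy b e.2 with h' | h' | h'
    · have := cVal_lt (hus hgu) hg1 (show g.2 < e.2 by omega)
      omega
    · have hge : g ≠ e := fun hh => heu (hh ▸ hgu)
      exact absurd (by omega : g.2 = e.2) (hs g (hus hgu) e he hge).2
    · exact h'
  -- (c) : c ≤ r.length + 1
  have hcle : c ≤ r.length + 1 := by
    by_contra hcon
    obtain ⟨h', _⟩ := ha r.length (by omega)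
    exact absurd h' (lt_irrefl _)
  rcases Nat.lt_or_ge (c-1) r.length with hlt' | hge'
  · -- ===== bump case =====
    have hc1 : c - 1 + 1 = c := by omega
    have hfind : r.findIdx? (fun y => e.2 < y) = some (c-1) := by
      rw [List.findIdx?_eq_some_iff_findIdx_eq]
      refine ⟨hlt', (List.findIdx_eq hlt').2 ⟨by simpa using hb hlt', ?_⟩⟩
      intro j hj
      obtain ⟨hh, hlt2⟩ := ha j (by omega)
      simp
      omega
    have hstep : rstep (r, qs, d) e = (r.set (c-1) e.2, qs, d ++ [(e.1, r[c-1])]) := by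
      rw [rstep, hfind]
      simp only
      rw [List.getD_eq_getElem r 0 hlt']
    have hcne : (clsS s u c).Nonempty := by
      have := (hcls (c-1)).2 (by omega)
      rwa [hc1] at this
    have hyval : fmin (clsS s u c) = r[c-1] := by
      have := hr (c-1) hlt'
      rwa [hc1] at this
    set y := r[c-1] with hy
    obtain ⟨ey, heyu, heyc, hey2⟩ := memS' c y (hyval ▸ fmin_mem hcne)
    have hey1 : ey.1 < e.1 := hlt ey heyu
    have heye : e.2 < y := hb hlt'
    have hmax : ∀ g ∈ u, cVal s g = c → g ≠ ey → g.1 < ey.1 := by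
      intro g hgu hgc hgne
      have hsne : g.2 ≠ ey.2 := (hs g (hus hgu) ey (hus heyu) hgne).2
      have hyle : y ≤ g.2 := hyval ▸ fmin_le (memS _ g hgu hgc)
      have hfne : g.1 ≠ ey.1 := (hs g (hus hgu) ey (hus heyu) hgne).1
      rcases lt_or_gt_of_ne hfne with h' | h'
      · exact h'
      · have := hs.antichain (hus heyu) (hus hgu) (by omega) h'
        omega
    have hconsec : Consec s ey e := by
      refine ⟨hus heyu, he, by omega, hey1, ?_⟩
      rintro g hgs hgc ⟨hb1, hb2⟩
      have hgu : g ∈ u := hcov g hgs hb2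
      have hgne : g ≠ ey := fun hh => by subst hh; omega
      have := hmax g hgu (by omega) hgne
      omega
    rw [hstep]
    have hlen1 : (r.set (c-1) e.2).length = r.length := by simp
    have hclsiff : ∀ k : ℕ, (clsS s (insert e u) (k+1)).Nonempty ↔ k < r.length := by
      intro k
      rw [hclsSins]
      split_ifs with hck
      · constructor
        · intro _; omega
        · intro _
          exact Finset.insert_nonempty _ _
      · exact hcls k
    refine ⟨by simpa using hlen, by simpa using hclsiff, ?_, ?_, ?_, ?_, ?_⟩
    · -- hr
      intro j hj
      simp only at hj ⊢
      rw [hlen1] at hj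
      rw [List.getElem_set]
      rcases eq_or_ne (c-1) j with hcj | hcj
      · rw [if_pos hcj]
        have hcj' : c = j + 1 := by omega
        rw [hclsSins, if_pos hcj']
        apply fmin_eq (Finset.mem_insert_self _ _)
        intro b hbmem
        rcases Finset.mem_insert.1 hbmem with rfl | hbo
        · exact le_rfl
        · have : y ≤ b := by
            rw [← hyval]
            apply fmin_le
            rwa [hcj']
          omega
      · rw [if_neg hcj]
        rw [hclsSins, if_neg (by omega)]
        exact hr j hj
    · -- hq
      intro j hj
      simp only at hj ⊢
      rw [hlen1] at hj
      rcases eq_or_ne (c-1) j with hcj | hcj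
      · have hcj' : c = j + 1 := by omega
        rw [hclsFins, if_pos hcj']
        have hold : fmin (clsF s u (j+1)) = qs[j]'(by omega) := hq j hj
        rw [← hold]
        apply fmin_eq
        · exact Finset.mem_insert_of_mem (fmin_mem
            ((clsS_nonempty_iff s u (j+1)).1 ((hcls j).2 hj)))
        · intro b hbmem
          rcases Finset.mem_insert.1 hbmem with rfl | hbo
          · have : fmin (clsF s u (j+1)) ≤ ey.1 :=
              fmin_le (by rw [← hcj']; exact memF _ ey heyu heyc)
            omega
          · exact fmin_le hbo
      · rw [hclsFins, if_neg (by omega)]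
        exact hq j hj
    · -- hsort
      simp only
      rw [List.pairwise_iff_getElem] at hsort ⊢
      intro i j hi hj hij
      rw [hlen1] at hi hj
      rw [List.getElem_set, List.getElem_set]
      split_ifs with h1 h2 h3
      · omega
      · have := hsort (c-1) j (by omega) hj (by omega)
        omega
      · obtain ⟨hh, hv⟩ := ha i (by omega)
        omega
      · exact hsort i j hi hj hij
    · -- hdsort
      simp only
      rw [List.pairwise_append]
      refine ⟨hdsort, List.pairwise_singleton _ _, ?_⟩
      rintro a had b hbmem
      rw [List.mem_singleton] at hbmem
      subst hbmem
      have : a ∈ derSet s u := hd ▸ List.mem_toFinset.2 had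
      simp only [derSet, Finset.mem_image, Finset.mem_filter, Finset.mem_product] at this
      obtain ⟨⟨p1, p2⟩, ⟨⟨hp1, hp2⟩, _⟩, rfl⟩ := this
      exact hlt p2 hp2
    · -- hd
      simp only
      rw [List.toFinset_append, hd]
      simp only [List.toFinset_cons, List.toFinset_nil, insert_empty_eq]
      ext x
      simp only [Finset.mem_union, Finset.mem_singleton]
      constructor
      · rintro (hx | rfl)
        · simp only [derSet, Finset.mem_image, Finset.mem_filter,
            Finset.mem_product] at hx ⊢
          obtain ⟨p, ⟨⟨hp1, hp2⟩, hcp⟩, rfl⟩ := hx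
          exact ⟨p, ⟨⟨Finset.mem_insert_of_mem hp1, Finset.mem_insert_of_mem hp2⟩, hcp⟩, rfl⟩
        · simp only [derSet, Finset.mem_image, Finset.mem_filter, Finset.mem_product]
          refine ⟨(ey, e), ⟨⟨Finset.mem_insert_of_mem heyu, Finset.mem_insert_self _ _⟩,
            hconsec⟩, by rw [hey2]⟩
      · rintro hx
        simp only [derSet, Finset.mem_image, Finset.mem_filter, Finset.mem_product] at hx
        obtain ⟨⟨p1, p2⟩, ⟨⟨hp1, hp2⟩, hcp⟩, rfl⟩ := hx
        dsimp only at hcp hp1 hp2 ⊢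
        rcases Finset.mem_insert.1 hp1 with he1 | hp1u
        · exfalso
          have h21 := hcp.2.2.2.1
          rcases Finset.mem_insert.1 hp2 with he2 | hp2u
          · rw [he1, he2] at h21; exact lt_irrefl _ h21
          · have := hlt p2 hp2u
            rw [he1] at h21
            omega
        · rcases Finset.mem_insert.1 hp2 with he2 | hp2u
          · right
            have hpe : Consec s p1 e := he2 ▸ hcp
            have hp1ey : p1 = ey := hpe.unique_left hs hconsec
            rw [he2, hp1ey, hey2]
          · left
            simp only [derSet, Finset.mem_image, Finset.mem_filter, Finset.mem_product]
            exact ⟨(p1, p2), ⟨⟨hp1u, hp2u⟩, hcp⟩, rfl⟩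
  · -- ===== append case =====
    have hcA : c = r.length + 1 := by omega
    have hfind : r.findIdx? (fun y => e.2 < y) = none := by
      rw [List.findIdx?_eq_none_iff]
      intro x hx
      obtain ⟨j, hj, rfl⟩ := List.mem_iff_getElem.1 hx
      obtain ⟨hh, hv⟩ := ha j (by omega)
      simp
      omega
    have hstep : rstep (r, qs, d) e = (r ++ [e.2], qs ++ [e.1], d) := by
      rw [rstep, hfind]
    rw [hstep]
    have hclsold : clsS s u c = ∅ := by
      have := (hcls r.length).not.2 (by omega)
      rw [Finset.not_nonempty_iff_eq_empty] at this
      rwa [← hcA] at this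
    have hclsoldF : clsF s u c = ∅ := by
      have := (clsS_nonempty_iff s u c).not.1 (by rw [hclsold]; simp)
      rwa [Finset.not_nonempty_iff_eq_empty] at this
    have hclsiff : ∀ k : ℕ, (clsS s (insert e u) (k+1)).Nonempty ↔ k < r.length + 1 := by
      intro k
      rw [hclsSins]
      split_ifs with hck
      · constructor
        · intro _; omega
        · intro _; exact Finset.insert_nonempty _ _
      · rw [hcls k]
        omega
    have hlen1 : (r ++ [e.2]).length = r.length + 1 := by simp
    refine ⟨by simp [hlen], by simpa [hlen1] using hclsiff, ?_, ?_, ?_,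
      by simpa using hdsort, ?_⟩
    · -- hr
      intro j hj
      simp only at hj ⊢
      rw [hlen1] at hj
      rcases Nat.lt_or_ge j r.length with hjl | hjl
      · rw [List.getElem_append_left hjl]
        rw [hclsSins, if_neg (by omega)]
        exact hr j hjl
      · have hjeq : j = r.length := by omega
        rw [List.getElem_concat_length hjeq]
        rw [hclsSins, if_pos (by omega), show j + 1 = c from by omega, hclsold]
        exact fmin_singleton _
    · -- hq
      intro j hj
      simp only at hj ⊢
      rw [hlen1] at hj
      rcases Nat.lt_or_ge j r.length with hjl | hjl
      · rw [List.getElem_append_left (show j < qs.length by omega)]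
        rw [hclsFins, if_neg (by omega)]
        exact hq j hjl
      · have hjeq : j = qs.length := by omega
        rw [List.getElem_concat_length hjeq]
        rw [hclsFins, if_pos (by omega), show j + 1 = c from by omega, hclsoldF]
        exact fmin_singleton _
    · -- hsort
      simp only
      rw [List.pairwise_append]
      refine ⟨hsort, List.pairwise_singleton _ _, ?_⟩
      intro a hamem b hbmem
      rw [List.mem_singleton] at hbmem
      subst hbmem
      obtain ⟨j, hj, rfl⟩ := List.mem_iff_getElem.1 hamem
      obtain ⟨hh, hv⟩ := ha j (by omega)
      exact hv
    · -- hd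
      simp only
      rw [hd]
      ext x
      simp only [derSet, Finset.mem_image, Finset.mem_filter, Finset.mem_product]
      constructor
      · rintro ⟨p, ⟨⟨hp1, hp2⟩, hcp⟩, rfl⟩
        exact ⟨p, ⟨⟨Finset.mem_insert_of_mem hp1, Finset.mem_insert_of_mem hp2⟩, hcp⟩, rfl⟩
      · rintro ⟨⟨p1, p2⟩, ⟨⟨hp1, hp2⟩, hcp⟩, rfl⟩
        dsimp only at hcp hp1 hp2 ⊢
        rcases Finset.mem_insert.1 hp1 with he1 | hp1u
        · exfalso
          have h21 := hcp.2.2.2.1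
          rcases Finset.mem_insert.1 hp2 with he2 | hp2u
          · rw [he1, he2] at h21; exact lt_irrefl _ h21
          · have := hlt p2 hp2u
            rw [he1] at h21
            omega
        · rcases Finset.mem_insert.1 hp2 with he2 | hp2u
          · exfalso
            have hcv := hcp.2.2.1
            rw [he2] at hcv
            have hmem : p1.2 ∈ clsS s u c := memS _ p1 hp1u (by omega)
            rw [hclsold] at hmem
            simp at hmem
          · exact ⟨(p1, p2), ⟨⟨hp1u, hp2u⟩, hcp⟩, rfl⟩

/-! ### Biwords and symmetry of the row decomposition -/

def BWord (l : List (ℕ × ℕ)) : Prop :=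
  l.Pairwise (fun a b => a.1 < b.1) ∧ l.Pairwise (fun a b => a.2 ≠ b.2)

lemma BWord.grid {l : List (ℕ × ℕ)} (h : BWord l) : Grid l.toFinset := by
  have hp : l.Pairwise (fun a b => a.1 ≠ b.1 ∧ a.2 ≠ b.2) :=
    (h.1.and h.2).imp (fun hab => ⟨Nat.ne_of_lt hab.1, hab.2⟩)
  have hsym : Symmetric (fun a b : ℕ × ℕ => a.1 ≠ b.1 ∧ a.2 ≠ b.2) := by
    intro a b hab
    exact ⟨hab.1.symm, hab.2.symm⟩
  intro e he f hf hne
  rw [List.mem_toFinset] at he hf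
  haveI : Std.Symm (fun a b : ℕ × ℕ => a.1 ≠ b.1 ∧ a.2 ≠ b.2) := ⟨hsym⟩
  exact hp.forall he hf hne

lemma BWord.nodup {l : List (ℕ × ℕ)} (h : BWord l) : l.Nodup :=
  h.1.imp (fun hab => fun hh => by subst hh; omega)

lemma list_eq_of_sorted_fst {l1 l2 : List (ℕ × ℕ)}
    (h1 : l1.Pairwise (fun a b => a.1 < b.1)) (h2 : l2.Pairwise (fun a b => a.1 < b.1))
    (h : l1.toFinset = l2.toFinset) : l1 = l2 := by
  have n1 : l1.Nodup := h1.imp (fun hab => fun hh => by subst hh; omega)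
  have n2 : l2.Nodup := h2.imp (fun hab => fun hh => by subst hh; omega)
  have hperm : l1.Perm l2 := List.perm_of_nodup_nodup_toFinset_eq n1 n2 h
  haveI : Std.Antisymm (fun a b : ℕ × ℕ => a.1 < b.1) :=
    ⟨fun a b hab hba => absurd (lt_trans hab hba) (lt_irrefl _)⟩
  exact List.Perm.eq_of_pairwise' h1 h2 hperm

def invert (l : List (ℕ × ℕ)) : List (ℕ × ℕ) :=
  (l.map Prod.swap).mergeSort (fun a b => a.1 ≤ b.1)

lemma invert_perm (l : List (ℕ × ℕ)) : (invert l).Perm (l.map Prod.swap) :=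
  List.mergeSort_perm _ _

lemma invert_toFinset (l : List (ℕ × ℕ)) :
    (invert l).toFinset = l.toFinset.image Prod.swap := by
  rw [List.toFinset_eq_of_perm _ _ (invert_perm l)]
  apply Finset.ext
  intro x
  simp only [List.mem_toFinset, List.mem_map, Finset.mem_image]

lemma invert_length (l : List (ℕ × ℕ)) : (invert l).length = l.length := by
  rw [(invert_perm l).length_eq, List.length_map]

lemma BWord_invert {l : List (ℕ × ℕ)} (h : BWord l) : BWord (invert l) := by
  have hle : List.Pairwise (fun a b : ℕ × ℕ => a.1 ≤ b.1) (invert l) := by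
    have := List.pairwise_mergeSort (le := fun a b : ℕ × ℕ => a.1 ≤ b.1)
      (fun a b c h1 h2 => by simp at h1 h2 ⊢; omega)
      (fun a b => by simp; omega) (l.map Prod.swap)
    exact this.imp (fun hab => by simpa using hab)
  have hfstnodup : ((invert l).map Prod.fst).Nodup := by
    have hperm : ((invert l).map Prod.fst).Perm (l.map Prod.snd) := by
      have := (invert_perm l).map Prod.fst
      rwa [List.map_map, show Prod.fst ∘ (Prod.swap : ℕ × ℕ → ℕ × ℕ) = Prod.snd from rfl]
        at this
    exact hperm.nodup_iff.2 (List.pairwise_map.2 h.2)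
  have hsndnodup : ((invert l).map Prod.snd).Nodup := by
    have hperm : ((invert l).map Prod.snd).Perm (l.map Prod.fst) := by
      have := (invert_perm l).map Prod.snd
      rwa [List.map_map, show Prod.snd ∘ (Prod.swap : ℕ × ℕ → ℕ × ℕ) = Prod.fst from rfl]
        at this
    exact hperm.nodup_iff.2 (List.pairwise_map.2 (h.1.imp (fun hab => Nat.ne_of_lt hab)))
  constructor
  · have hne : List.Pairwise (fun a b : ℕ × ℕ => a.1 ≠ b.1) (invert l) :=
      List.pairwise_map.1 hfstnodup
    exact (hle.and hne).imp (fun hab => lt_of_le_of_ne hab.1 hab.2)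
  · exact List.pairwise_map.1 hsndnodup

lemma RSInv_fold {l : List (ℕ × ℕ)} (hbw : BWord l) :
    ∀ u, u <+: l → RSInv l.toFinset u.toFinset (u.foldl rstep ([], [], [])) := by
  intro u hu
  induction u using List.reverseRecOn with
  | nil => simpa using RSInv_init _
  | append_singleton v e ih =>
    have hv : v <+: l := (List.prefix_append v [e]).trans hu
    obtain ⟨t, ht⟩ := hu
    have hlpw : List.Pairwise (fun a b : ℕ × ℕ => a.1 < b.1) (v ++ [e] ++ t) :=
      ht ▸ hbw.1
    rw [List.append_assoc] at hlpw
    rw [List.pairwise_append] at hlpw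
    obtain ⟨hpv, hpet, hvet⟩ := hlpw
    rw [List.pairwise_append] at hpet
    have hltv : ∀ g ∈ v.toFinset, g.1 < e.1 := by
      intro g hg
      exact hvet g (List.mem_toFinset.1 hg) e (by simp)
    have hnot : e ∉ v.toFinset := fun hmem => absurd (hltv e hmem) (lt_irrefl _)
    have hsub : v.toFinset ⊆ l.toFinset := fun x hx => by
      rw [List.mem_toFinset] at hx ⊢
      exact (hv.sublist).mem hx
    have hmem : e ∈ l.toFinset := by
      rw [List.mem_toFinset, ← ht]
      simp
    have hcov : ∀ g ∈ l.toFinset, g.1 < e.1 → g ∈ v.toFinset := by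
      intro g hg hglt
      rw [List.mem_toFinset, ← ht] at hg
      rw [List.mem_toFinset]
      rw [List.append_assoc, List.mem_append, List.mem_append] at hg
      rcases hg with hg | hg | hg
      · exact hg
      · rw [List.mem_singleton] at hg
        subst hg
        exact absurd hglt (lt_irrefl _)
      · have := hpet.2.2 e (by simp) g hg
        omega
    have key := RSInv_step (hbw.grid) hsub hmem hnot hltv hcov (ih hv)
    have htf : (v ++ [e]).toFinset = insert e v.toFinset := by
      rw [List.toFinset_append]
      rw [Finset.union_comm]
      simp
    rw [htf, List.foldl_append]
    simpa using key

lemma rowD_inv {l : List (ℕ × ℕ)} (hbw : BWord l) :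
    RSInv l.toFinset l.toFinset (rowD l) :=
  RSInv_fold hbw l (List.prefix_refl l)

lemma BWord_derived {l : List (ℕ × ℕ)} (h : BWord l) : BWord (rowD l).2.2 := by
  have hI := rowD_inv h
  have hgrid := h.grid
  refine ⟨hI.hdsort, ?_⟩
  have hinj : ∀ a ∈ derSet l.toFinset l.toFinset, ∀ b ∈ derSet l.toFinset l.toFinset,
      a.2 = b.2 → a = b := by
    intro a ha b hb hab
    simp only [derSet, Finset.mem_image, Finset.mem_filter, Finset.mem_product] at ha hb
    obtain ⟨⟨g, f⟩, ⟨⟨hg, hf⟩, hcg⟩, rfl⟩ := ha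
    obtain ⟨⟨g', f'⟩, ⟨⟨hg', hf'⟩, hcg'⟩, rfl⟩ := hb
    dsimp only at hcg hcg' hab ⊢
    have hgg : g = g' := by
      by_contra hne
      exact absurd hab (hgrid g hg g' hg' hne).2
    subst hgg
    have : f = f' := Consec.unique_right hgrid hcg hcg'
    subst this
    rfl
  rw [List.pairwise_iff_getElem]
  intro i j hi hj hij
  have hfst := (List.pairwise_iff_getElem.1 hI.hdsort) i j hi hj hij
  intro hsnd
  have hmi : (rowD l).2.2[i] ∈ derSet l.toFinset l.toFinset := by
    rw [← hI.hd]
    exact List.mem_toFinset.2 (List.getElem_mem _)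
  have hmj : (rowD l).2.2[j] ∈ derSet l.toFinset l.toFinset := by
    rw [← hI.hd]
    exact List.mem_toFinset.2 (List.getElem_mem _)
  have := hinj _ hmi _ hmj hsnd
  rw [this] at hfst
  exact absurd hfst (lt_irrefl _)

lemma rowD_swap {l : List (ℕ × ℕ)} (h : BWord l) :
    (rowD (invert l)).1 = (rowD l).2.1 ∧ (rowD (invert l)).2.1 = (rowD l).1 ∧
      (rowD (invert l)).2.2 = invert (rowD l).2.2 := by
  have hgrid := h.grid
  have hIl := rowD_inv h
  have hbi := BWord_invert h
  have hIi := rowD_inv hbi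
  rw [invert_toFinset l] at hIi
  set s := l.toFinset with hs
  -- lengths agree
  have hlen : (rowD (invert l)).1.length = (rowD l).1.length := by
    have hiff : ∀ c, c < (rowD (invert l)).1.length ↔ c < (rowD l).1.length := by
      intro c
      rw [← hIi.hcls c, clsS_swap, ← (hIl.hcls c)]
      exact (clsS_nonempty_iff s s (c+1)).symm
    rcases lt_trichotomy (rowD (invert l)).1.length (rowD l).1.length with hh | hh | hh
    · have := (hiff (rowD (invert l)).1.length).2 hh; omega
    · exact hh
    · have := (hiff (rowD l).1.length).1 hh; omega
  refine ⟨?_, ?_, ?_⟩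
  · -- first row of inverted = recording row
    apply List.ext_getElem (by rw [hlen, hIl.hlen])
    intro j h1 h2
    rw [← hIi.hr j h1, clsS_swap]
    have := hIl.hq j (by omega)
    convert this using 2
  · apply List.ext_getElem (by rw [hIi.hlen, hlen])
    intro j h1 h2
    have hj : j < (rowD (invert l)).1.length := by
      rw [hIi.hlen] at h1; exact h1
    rw [← hIi.hq j hj, clsF_swap]
    exact hIl.hr j (by omega)
  · have hbd := BWord_derived h
    have hbdi := BWord_invert hbd
    apply list_eq_of_sorted_fst hIi.hdsort hbdi.1
    rw [hIi.hd, derSet_swap hgrid, ← hIl.hd, invert_toFinset]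

/-! ### Symmetry of RS2 and the final theorem -/

lemma invert_nil : invert [] = [] := by
  simp [invert]

lemma RS2_cons {l : List (ℕ × ℕ)} (h : l ≠ []) :
    RS2 l = ((rowD l).1 :: (RS2 (rowD l).2.2).1,
             (rowD l).2.1 :: (RS2 (rowD l).2.2).2) := by
  rcases l with _ | ⟨e, l⟩
  · exact absurd rfl h
  · rw [RS2]

lemma RS2_swap_aux : ∀ (n : ℕ) (l : List (ℕ × ℕ)), l.length ≤ n → BWord l →
    RS2 (invert l) = ((RS2 l).2, (RS2 l).1) := by
  intro n
  induction n with
  | zero =>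
    intro l hl _
    have : l = [] := List.length_eq_zero_iff.1 (Nat.le_zero.1 hl)
    subst this
    rw [invert_nil, show RS2 [] = (([], []) : List (List ℕ) × List (List ℕ)) from by rw [RS2]]
  | succ n ih =>
    intro l hl hbw
    rcases eq_or_ne l [] with rfl | hne
    · rw [invert_nil, show RS2 [] = (([], []) : List (List ℕ) × List (List ℕ)) from by rw [RS2]]
    · have hine : invert l ≠ [] := by
        intro hcon
        have := invert_length l
        rw [hcon] at this
        simp at this
        exact hne (List.length_eq_zero_iff.1 this.symm)
      rw [RS2_cons hine, RS2_cons hne]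
      obtain ⟨e1, e2, e3⟩ := rowD_swap hbw
      rw [e1, e2, e3]
      have hd : (rowD l).2.2.length ≤ n := by
        have := rowD_d_lt l hne
        omega
      rw [ih _ hd (BWord_derived hbw)]

lemma RS2_swap {l : List (ℕ × ℕ)} (hbw : BWord l) :
    RS2 (invert l) = ((RS2 l).2, (RS2 l).1) :=
  RS2_swap_aux l.length l le_rfl hbw

/-! ### Assembly for permutations -/

def permL {n : ℕ} (w : Equiv.Perm (Fin n)) : List (ℕ × ℕ) :=
  ((permWord w).zipIdx.map Prod.swap).map (fun ix => (ix.1 + 1, ix.2))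

lemma permL_length {n : ℕ} (w : Equiv.Perm (Fin n)) : (permL w).length = n := by
  simp [permL, permWord]

lemma permL_getElem {n : ℕ} (w : Equiv.Perm (Fin n)) (i : ℕ) (hi : i < (permL w).length) :
    (permL w)[i] = (i + 1, (w ⟨i, by rwa [permL_length] at hi⟩ : ℕ) + 1) := by
  have hi' : i < n := by rwa [permL_length] at hi
  simp only [permL, List.getElem_map, List.getElem_zipIdx, Prod.swap_prod_mk, Nat.zero_add, permWord, List.getElem_ofFn]

lemma BWord_permL {n : ℕ} (w : Equiv.Perm (Fin n)) : BWord (permL w) := by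
  constructor
  · rw [List.pairwise_iff_getElem]
    intro i j hi hj hij
    rw [permL_getElem w i hi, permL_getElem w j hj]
    simpa using hij
  · rw [List.pairwise_iff_getElem]
    intro i j hi hj hij
    rw [permL_getElem w i hi, permL_getElem w j hj]
    simp only [ne_eq, Nat.add_right_cancel_iff]
    intro hcon
    have : (⟨i, by rwa [permL_length] at hi⟩ : Fin n) = ⟨j, by rwa [permL_length] at hj⟩ :=
      w.injective (Fin.val_injective hcon)
    simp at this
    omega

lemma permL_mem_toFinset {n : ℕ} (w : Equiv.Perm (Fin n)) (x : ℕ × ℕ) :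
    x ∈ (permL w).toFinset ↔ ∃ i : Fin n, x = ((i : ℕ) + 1, (w i : ℕ) + 1) := by
  rw [List.mem_toFinset, List.mem_iff_getElem]
  constructor
  · rintro ⟨i, hi, rfl⟩
    exact ⟨⟨i, by rwa [permL_length] at hi⟩, (permL_getElem w i hi)⟩
  · rintro ⟨i, rfl⟩
    refine ⟨(i : ℕ), by rw [permL_length]; exact i.2, ?_⟩
    rw [permL_getElem w i (by rw [permL_length]; exact i.2)]

lemma invert_permL {n : ℕ} (w : Equiv.Perm (Fin n)) : invert (permL w) = permL w⁻¹ := by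
  apply list_eq_of_sorted_fst (BWord_invert (BWord_permL w)).1 (BWord_permL w⁻¹).1
  rw [invert_toFinset]
  ext x
  rw [permL_mem_toFinset, Finset.mem_image]
  constructor
  · rintro ⟨a, ha, rfl⟩
    rw [List.mem_toFinset] at ha
    obtain ⟨i, rfl⟩ := (permL_mem_toFinset w a).1 (List.mem_toFinset.2 ha)
    refine ⟨w i, ?_⟩
    simp [Prod.swap]
  · rintro ⟨i, rfl⟩
    refine ⟨((w⁻¹ i : ℕ) + 1, (i : ℕ) + 1), ?_, rfl⟩
    rw [List.mem_toFinset]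
    have := (permL_mem_toFinset w ((w⁻¹ i : ℕ) + 1, (i : ℕ) + 1)).2 ⟨w⁻¹ i, by simp⟩
    rwa [List.mem_toFinset] at this

lemma RSpair_eq_RS2 {n : ℕ} (w : Equiv.Perm (Fin n)) :
    RSpair (permWord w) = RS2 (permL w) :=
  (RSpair_eq_Ffold _).trans (RS2_eq_Ffold _).symm

theorem robinson_schensted_symmetry {n : ℕ} (w : Equiv.Perm (Fin n)) :
    RSP w⁻¹ = RSQ w ∧ RSQ w⁻¹ = RSP w := by
  have key : RS2 (permL w⁻¹) = ((RS2 (permL w)).2, (RS2 (permL w)).1) := by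
    rw [← invert_permL w]
    exact RS2_swap (BWord_permL w)
  constructor
  · show (RSpair (permWord w⁻¹)).1 = (RSpair (permWord w)).2
    rw [RSpair_eq_RS2, RSpair_eq_RS2, key]
  · show (RSpair (permWord w⁻¹)).2 = (RSpair (permWord w)).1
    rw [RSpair_eq_RS2, RSpair_eq_RS2, key]
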